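/- For every real number d ≥ 1, the function ⦀·⦀_d is a norm on the complex vector space V: ⦀v⦀_d ≥ 0 for all v, ⦀v⦀_d = 0 if and only if v = 0, ⦀cv⦀_d = |c|·⦀v⦀_d for every c ∈ ℂ and v ∈ V, and ⦀u+v⦀_d ≤ ⦀u⦀_d + ⦀v⦀_d for all u, v ∈ V. -/

import Mathlib

open MeasureTheory

set_option linter.unusedSectionVars false

lemma auxZeroOnIoo {f : ℝ → ℝ} (hc : Continuous f) (hnn : ∀ t, 0 ≤ f t)
    (h : ∫ t in (0:ℝ)..(2 * Real.pi), f t = 0) :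
    ∀ t ∈ Set.Ioo (0:ℝ) (2 * Real.pi), f t = 0 := by
  have h2π : (0:ℝ) ≤ 2 * Real.pi := by positivity
  rw [intervalIntegral.integral_eq_zero_iff_of_le_of_nonneg_ae h2π
      (Filter.Eventually.of_forall hnn) (hc.intervalIntegrable _ _)] at h
  intro t ht
  by_contra hne
  have hnull : volume ({x | f x ≠ 0} ∩ Set.Ioc 0 (2 * Real.pi)) = 0 := by
    have := h
    rw [Filter.EventuallyEq, ae_iff, Measure.restrict_apply'
      measurableSet_Ioc] at this
    simpa using this
  have hU : IsOpen ({x | f x ≠ 0} ∩ Set.Ioo 0 (2 * Real.pi)) :=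
    (isOpen_compl_singleton.preimage hc).inter isOpen_Ioo
  have hpos : 0 < volume ({x | f x ≠ 0} ∩ Set.Ioo 0 (2 * Real.pi)) :=
    hU.measure_pos volume ⟨t, hne, ht⟩
  have : volume ({x | f x ≠ 0} ∩ Set.Ioo 0 (2 * Real.pi)) = 0 :=
    measure_mono_null (by intro x hx; exact ⟨hx.1, Set.Ioo_subset_Ioc_self hx.2⟩) hnull
  simp [this] at hpos

lemma auxMinkowski {f g : ℝ → ℝ} {d : ℝ} (hd : 1 ≤ d)
    (hf : Continuous f) (hg : Continuous g)
    (hf0 : ∀ t, 0 ≤ f t) (hg0 : ∀ t, 0 ≤ g t) :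
    (∫ t in (0:ℝ)..(2 * Real.pi), (f t + g t) ^ d) ^ (1/d) ≤
      (∫ t in (0:ℝ)..(2 * Real.pi), f t ^ d) ^ (1/d) +
      (∫ t in (0:ℝ)..(2 * Real.pi), g t ^ d) ^ (1/d) := by
  have hd0 : (0:ℝ) < d := lt_of_lt_of_le one_pos hd
  have h2π : (0:ℝ) ≤ 2 * Real.pi := by positivity
  set μ : Measure ℝ := volume.restrict (Set.Ioc 0 (2 * Real.pi)) with hμ
  have conv : ∀ (h : ℝ → ℝ), Continuous h → (∀ t, 0 ≤ h t) →
      ENNReal.ofReal (∫ t in (0:ℝ)..(2 * Real.pi), h t ^ d)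
        = ∫⁻ t, ENNReal.ofReal (h t) ^ d ∂μ := by
    intro h hc hnn
    rw [intervalIntegral.integral_of_le h2π]
    rw [MeasureTheory.ofReal_integral_eq_lintegral_ofReal
      ((hc.rpow_const (fun x => Or.inr hd0.le)).integrableOn_Ioc)
      (Filter.Eventually.of_forall (fun t => Real.rpow_nonneg (hnn t) d))]
    exact lintegral_congr fun t => (ENNReal.ofReal_rpow_of_nonneg (hnn t) hd0.le).symm
  have key := ENNReal.lintegral_Lp_add_le (μ := μ)
    (f := fun t => ENNReal.ofReal (f t)) (g := fun t => ENNReal.ofReal (g t))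
    (hf.measurable.ennreal_ofReal.aemeasurable)
    (hg.measurable.ennreal_ofReal.aemeasurable) hd
  have hsum : ∫⁻ t, ((fun t => ENNReal.ofReal (f t)) + fun t => ENNReal.ofReal (g t)) t ^ d ∂μ
      = ∫⁻ t, ENNReal.ofReal (f t + g t) ^ d ∂μ := by
    refine lintegral_congr fun t => ?_
    rw [Pi.add_apply, ← ENNReal.ofReal_add (hf0 t) (hg0 t)]
  rw [hsum, ← conv (fun t => f t + g t) (hf.add hg) (fun t => add_nonneg (hf0 t) (hg0 t)),
    ← conv _ hf hf0, ← conv _ hg hg0] at key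
  have hint_nn : ∀ (h : ℝ → ℝ), (∀ t, 0 ≤ h t) →
      0 ≤ ∫ t in (0:ℝ)..(2 * Real.pi), h t ^ d := fun h hnn =>
    intervalIntegral.integral_nonneg h2π (fun t _ => Real.rpow_nonneg (hnn t) d)
  rw [ENNReal.ofReal_rpow_of_nonneg (hint_nn _ (fun t => add_nonneg (hf0 t) (hg0 t))) (by positivity),
    ENNReal.ofReal_rpow_of_nonneg (hint_nn _ hf0) (by positivity),
    ENNReal.ofReal_rpow_of_nonneg (hint_nn _ hg0) (by positivity),
    ← ENNReal.ofReal_add (Real.rpow_nonneg (hint_nn _ hf0) _) (Real.rpow_nonneg (hint_nn _ hg0) _),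
    ENNReal.ofReal_le_ofReal_iff (add_nonneg (Real.rpow_nonneg (hint_nn _ hf0) _) (Real.rpow_nonneg (hint_nn _ hg0) _))] at key
  exact key

lemma auxAbsCos (t s : ℝ) : |Real.cos t - Real.cos s| ≤ |t - s| := by
  rw [Real.cos_sub_cos, abs_mul, abs_mul]
  have e : |(-2:ℝ)| = 2 := by norm_num
  rw [e]
  have h1 := Real.abs_sin_le_one ((t + s) / 2)
  have h2 : |Real.sin ((t - s) / 2)| ≤ |t - s| / 2 := by
    have := Real.abs_sin_le_abs (x := (t - s) / 2)
    rwa [abs_div, abs_two] at this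
  nlinarith [abs_nonneg (Real.sin ((t + s) / 2)), abs_nonneg (Real.sin ((t - s) / 2))]

lemma auxAbsSin (t s : ℝ) : |Real.sin t - Real.sin s| ≤ |t - s| := by
  rw [Real.sin_sub_sin, abs_mul, abs_mul, abs_two]
  have h1 := Real.abs_cos_le_one ((t + s) / 2)
  have h2 : |Real.sin ((t - s) / 2)| ≤ |t - s| / 2 := by
    have := Real.abs_sin_le_abs (x := (t - s) / 2)
    rwa [abs_div, abs_two] at this
  nlinarith [abs_nonneg (Real.sin ((t - s) / 2)), abs_nonneg (Real.cos ((t + s) / 2))]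

noncomputable def FF {V : Type} [AddCommGroup V] [Module ℂ V]
    (Nr : V → ℝ) (invol : V → V) (v : V) (t : ℝ) : ℝ :=
  Nr (Complex.exp (↑t * Complex.I) • v + Complex.exp (-(↑t * Complex.I)) • invol v)

section Main
variable {V : Type} [AddCommGroup V] [Module ℂ V]
    (invol : V → V)
    (hadd : ∀ u v : V, invol (u + v) = invol u + invol v)
    (hsmul : ∀ (c : ℂ) (v : V), invol (c • v) = (starRingEnd ℂ c) • invol v)
    (hinvol : ∀ v : V, invol (invol v) = v)
    (Nr : V → ℝ)
    (hNnonneg : ∀ v : V, invol v = v → 0 ≤ Nr v)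
    (hNdef : ∀ v : V, invol v = v → (Nr v = 0 ↔ v = 0))
    (hNhom : ∀ (r : ℝ) (v : V), invol v = v → Nr ((r : ℂ) • v) = |r| * Nr v)
    (hNadd : ∀ u v : V, invol u = u → invol v = v → Nr (u + v) ≤ Nr u + Nr v)

include hadd hsmul hinvol

lemma pInv0 : invol 0 = 0 := by have := hsmul 0 0; simpa using this

lemma pInvNeg : ∀ w : V, invol (-w) = -invol w := by
  intro w; have := hsmul (-1) w; simpa using this

lemma pInvSub : ∀ u w : V, invol (u - w) = invol u - invol w := by
  intro u w
  rw [sub_eq_add_neg, hadd, pInvNeg invol hadd hsmul hinvol, sub_eq_add_neg]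

lemma pRA (v : V) : invol (v + invol v) = v + invol v := by
  rw [hadd, hinvol]; exact add_comm _ _

lemma pRB (v : V) : invol (Complex.I • (v - invol v)) = Complex.I • (v - invol v) := by
  rw [hsmul, pInvSub invol hadd hsmul hinvol, hinvol, Complex.conj_I]
  module

lemma pRsmul (x : ℝ) (w : V) (hw : invol w = w) : invol ((x:ℂ) • w) = (x:ℂ) • w := by
  rw [hsmul, Complex.conj_ofReal, hw]

lemma pRcomb (x y : ℝ) (v : V) :
    invol ((x:ℂ) • (v + invol v) + (y:ℂ) • (Complex.I • (v - invol v)))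
      = (x:ℂ) • (v + invol v) + (y:ℂ) • (Complex.I • (v - invol v)) := by
  rw [hadd, hsmul, hsmul, Complex.conj_ofReal, Complex.conj_ofReal,
    pRA invol hadd hsmul hinvol, pRB invol hadd hsmul hinvol]

lemma pDecomp (v : V) (t : ℝ) :
    Complex.exp (↑t * Complex.I) • v + Complex.exp (-(↑t * Complex.I)) • invol v
      = ((Real.cos t : ℝ) : ℂ) • (v + invol v)
        + ((Real.sin t : ℝ) : ℂ) • (Complex.I • (v - invol v)) := by
  have h1 : Complex.exp (↑t * Complex.I)
      = (Real.cos t : ℂ) + (Real.sin t : ℂ) * Complex.I := by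
    rw [Complex.exp_mul_I, Complex.ofReal_cos, Complex.ofReal_sin]
  have h2 : Complex.exp (-(↑t * Complex.I))
      = (Real.cos t : ℂ) - (Real.sin t : ℂ) * Complex.I := by
    have h : -((t:ℂ) * Complex.I) = ((-t : ℝ) : ℂ) * Complex.I := by push_cast; ring
    rw [h, Complex.exp_mul_I, ← Complex.ofReal_cos, ← Complex.ofReal_sin,
      Real.cos_neg, Real.sin_neg]
    push_cast; ring
  rw [h1, h2]
  module

lemma pRF (v : V) (t : ℝ) :
    invol (Complex.exp (↑t * Complex.I) • v + Complex.exp (-(↑t * Complex.I)) • invol v)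
      = Complex.exp (↑t * Complex.I) • v + Complex.exp (-(↑t * Complex.I)) • invol v := by
  rw [pDecomp invol hadd hsmul hinvol, pRcomb invol hadd hsmul hinvol]

include hNnonneg in
lemma pF0 (v : V) (t : ℝ) : 0 ≤ FF Nr invol v t :=
  hNnonneg _ (pRF invol hadd hsmul hinvol v t)

include hNadd in
lemma pFadd (u v : V) (t : ℝ) :
    FF Nr invol (u + v) t ≤ FF Nr invol u t + FF Nr invol v t := by
  unfold FF
  have e : Complex.exp (↑t * Complex.I) • (u + v)
        + Complex.exp (-(↑t * Complex.I)) • invol (u + v)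
      = (Complex.exp (↑t * Complex.I) • u + Complex.exp (-(↑t * Complex.I)) • invol u)
        + (Complex.exp (↑t * Complex.I) • v + Complex.exp (-(↑t * Complex.I)) • invol v) := by
    rw [hadd, smul_add, smul_add]; abel
  rw [e]
  exact hNadd _ _ (pRF invol hadd hsmul hinvol u t) (pRF invol hadd hsmul hinvol v t)

lemma pFdecomp (v : V) (t : ℝ) :
    FF Nr invol v t = Nr (((Real.cos t : ℝ) : ℂ) • (v + invol v)
        + ((Real.sin t : ℝ) : ℂ) • (Complex.I • (v - invol v))) := by
  unfold FF; rw [pDecomp invol hadd hsmul hinvol]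

include hNnonneg hNhom hNadd in
lemma pFcont (v : V) : Continuous (FF Nr invol v) := by
  set a := v + invol v with ha
  set b := Complex.I • (v - invol v) with hb
  have hRa := pRA invol hadd hsmul hinvol v
  have hRb := pRB invol hadd hsmul hinvol v
  have hK : 0 ≤ Nr a + Nr b := add_nonneg (hNnonneg _ hRa) (hNnonneg _ hRb)
  have hdist : ∀ s t : ℝ, FF Nr invol v t - FF Nr invol v s ≤ (Nr a + Nr b) * |t - s| := by
    intro s t
    rw [pFdecomp invol hadd hsmul hinvol Nr, pFdecomp invol hadd hsmul hinvol Nr]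
    have hsplit : ((Real.cos t : ℝ):ℂ) • a + ((Real.sin t : ℝ):ℂ) • b
        = (((Real.cos s : ℝ):ℂ) • a + ((Real.sin s : ℝ):ℂ) • b)
          + ((((Real.cos t - Real.cos s : ℝ)):ℂ) • a
            + (((Real.sin t - Real.sin s : ℝ)):ℂ) • b) := by
      push_cast; module
    rw [hsplit]
    have h1 := hNadd _ _ (pRcomb invol hadd hsmul hinvol (Real.cos s) (Real.sin s) v)
      (pRcomb invol hadd hsmul hinvol (Real.cos t - Real.cos s) (Real.sin t - Real.sin s) v)
    have h2 := hNadd _ _ (pRsmul invol hadd hsmul hinvol (Real.cos t - Real.cos s) a hRa)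
      (pRsmul invol hadd hsmul hinvol (Real.sin t - Real.sin s) b hRb)
    have h3 := hNhom (Real.cos t - Real.cos s) a hRa
    have h4 := hNhom (Real.sin t - Real.sin s) b hRb
    have h5 : |Real.cos t - Real.cos s| * Nr a ≤ |t - s| * Nr a :=
      mul_le_mul_of_nonneg_right (auxAbsCos t s) (hNnonneg _ hRa)
    have h6 : |Real.sin t - Real.sin s| * Nr b ≤ |t - s| * Nr b :=
      mul_le_mul_of_nonneg_right (auxAbsSin t s) (hNnonneg _ hRb)
    have := h1.trans (by linarith [h2, h3.le, h4.le] : Nr (((Real.cos s:ℝ):ℂ) • a + ((Real.sin s:ℝ):ℂ) • b)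
      + Nr ((((Real.cos t - Real.cos s : ℝ)):ℂ) • a + (((Real.sin t - Real.sin s : ℝ)):ℂ) • b)
      ≤ Nr (((Real.cos s:ℝ):ℂ) • a + ((Real.sin s:ℝ):ℂ) • b)
        + (|Real.cos t - Real.cos s| * Nr a + |Real.sin t - Real.sin s| * Nr b))
    have hgoal : Nr (((Real.cos s:ℝ):ℂ) • a + ((Real.sin s:ℝ):ℂ) • b)
        + (|Real.cos t - Real.cos s| * Nr a + |Real.sin t - Real.sin s| * Nr b)
      ≤ Nr (((Real.cos s:ℝ):ℂ) • a + ((Real.sin s:ℝ):ℂ) • b) + (Nr a + Nr b) * |t - s| := by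
      have : (Nr a + Nr b) * |t - s| = |t - s| * Nr a + |t - s| * Nr b := by ring
      rw [this]
      linarith
    linarith [this.trans hgoal]
  have hlip : LipschitzWith (Real.toNNReal (Nr a + Nr b)) (FF Nr invol v) := by
    apply LipschitzWith.of_dist_le_mul
    intro x y
    rw [Real.dist_eq, Real.dist_eq, Real.coe_toNNReal _ hK]
    rw [abs_sub_le_iff]
    constructor
    · exact (hdist y x).trans (by rw [abs_sub_comm])
    · exact (hdist x y).trans (by rw [abs_sub_comm])
  exact hlip.continuous

lemma pFper (v : V) : Function.Periodic (FF Nr invol v) (2 * Real.pi) := by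
  intro t
  unfold FF
  have e1 : Complex.exp (↑(t + 2 * Real.pi) * Complex.I) = Complex.exp (↑t * Complex.I) := by
    push_cast
    rw [add_mul, Complex.exp_add, Complex.exp_two_pi_mul_I, mul_one]
  have e2 : Complex.exp (-(↑(t + 2 * Real.pi) * Complex.I))
      = Complex.exp (-(↑t * Complex.I)) := by
    push_cast
    rw [add_mul, neg_add, Complex.exp_add, Complex.exp_neg (2 * ↑Real.pi * Complex.I),
      Complex.exp_two_pi_mul_I, inv_one, mul_one]
  rw [e1, e2]

include hNhom in
lemma pFpi (v : V) : FF Nr invol v Real.pi = Nr (v + invol v) := by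
  rw [pFdecomp invol hadd hsmul hinvol Nr, Real.cos_pi, Real.sin_pi]
  have h := hNhom (-1) (v + invol v) (pRA invol hadd hsmul hinvol v)
  simp only [Complex.ofReal_zero, zero_smul, add_zero, Complex.ofReal_neg,
    Complex.ofReal_one] at *
  rw [h, abs_neg, abs_one, one_mul]

lemma pFhalf (v : V) : FF Nr invol v (Real.pi / 2) = Nr (Complex.I • (v - invol v)) := by
  rw [pFdecomp invol hadd hsmul hinvol Nr, Real.cos_pi_div_two, Real.sin_pi_div_two]
  simp only [Complex.ofReal_zero, zero_smul, zero_add, Complex.ofReal_one, one_smul]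

include hNdef in
lemma pNr0 : Nr (0 : V) = 0 := (hNdef 0 (pInv0 invol hadd hsmul hinvol)).mpr rfl

include hNdef in
lemma pFzero (t : ℝ) : FF Nr invol (0 : V) t = 0 := by
  unfold FF
  rw [pInv0 invol hadd hsmul hinvol, smul_zero, smul_zero, add_zero]
  exact pNr0 invol hadd hsmul hinvol Nr hNdef

include hNhom in
lemma pFsmul (c : ℂ) (v : V) (t : ℝ) :
    FF Nr invol (c • v) t = ‖c‖ * FF Nr invol v (t + c.arg) := by
  have e1 : Complex.exp (↑t * Complex.I) * c
      = ((‖c‖ : ℝ) : ℂ) * Complex.exp (↑(t + c.arg) * Complex.I) := by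
    conv_lhs => rw [← Complex.norm_mul_exp_arg_mul_I c]
    rw [Complex.ofReal_add, add_mul, Complex.exp_add]
    ring
  have hconj : (starRingEnd ℂ) c
      = ((‖c‖ : ℝ) : ℂ) * Complex.exp (-(↑c.arg * Complex.I)) := by
    conv_lhs => rw [← Complex.norm_mul_exp_arg_mul_I c]
    rw [map_mul, Complex.conj_ofReal, ← Complex.exp_conj]
    congr 1
    rw [map_mul, Complex.conj_ofReal, Complex.conj_I]
    ring
  have e2 : Complex.exp (-(↑t * Complex.I)) * (starRingEnd ℂ) c
      = ((‖c‖ : ℝ) : ℂ) * Complex.exp (-(↑(t + c.arg) * Complex.I)) := by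
    rw [hconj, Complex.ofReal_add, add_mul, neg_add, Complex.exp_add]
    ring
  unfold FF
  rw [hsmul, smul_smul, smul_smul, e1, e2, ← smul_smul, ← smul_smul, ← smul_add,
    hNhom _ _ (pRF invol hadd hsmul hinvol v (t + c.arg)),
    abs_of_nonneg (norm_nonneg c)]


end Main


/-- Given a function `Nr` (a norm on the real points of `V`) and a conjugate-linear
involution `invol` on `V`, this is the extended quantity
`⦀v⦀_d = ((1/(2π b_d)) ∫_0^{2π} ‖e^{it}v + e^{-it}v*‖^d dt)^(1/d)` with
`b_d = Γ(d+1)/Γ(d/2+1)^2`, so `1/(2π b_d) = Γ(d/2+1)^2/(2π Γ(d+1))`. -/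
noncomputable def circNorm {V : Type} [AddCommGroup V] [Module ℂ V]
    (Nr : V → ℝ) (invol : V → V) (d : ℝ) (v : V) : ℝ :=
  ((Real.Gamma (d / 2 + 1) ^ 2 / (2 * Real.pi * Real.Gamma (d + 1))) *
    ∫ t in (0:ℝ)..(2 * Real.pi),
      Nr (Complex.exp (↑t * Complex.I) • v +
        Complex.exp (-(↑t * Complex.I)) • invol v) ^ d) ^ (1 / d) 

/-- For every real `d ≥ 1`, the function `⦀·⦀_d` is a norm on the complex
vector space `V`: nonnegative, vanishing exactly at `0`, absolutely homogeneous over `ℂ`,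
and subadditive. -/
theorem circNorm_is_norm {V : Type} [AddCommGroup V] [Module ℂ V]
    (invol : V → V)
    (hadd : ∀ u v : V, invol (u + v) = invol u + invol v)
    (hsmul : ∀ (c : ℂ) (v : V), invol (c • v) = (starRingEnd ℂ c) • invol v)
    (hinvol : ∀ v : V, invol (invol v) = v)
    (Nr : V → ℝ)
    (hNnonneg : ∀ v : V, invol v = v → 0 ≤ Nr v)
    (hNdef : ∀ v : V, invol v = v → (Nr v = 0 ↔ v = 0))
    (hNhom : ∀ (r : ℝ) (v : V), invol v = v → Nr ((r : ℂ) • v) = |r| * Nr v)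
    (hNadd : ∀ u v : V, invol u = u → invol v = v → Nr (u + v) ≤ Nr u + Nr v)
    (d : ℝ) (hd : 1 ≤ d) :
    (∀ v : V, 0 ≤ circNorm Nr invol d v) ∧
    (∀ v : V, circNorm Nr invol d v = 0 ↔ v = 0) ∧
    (∀ (c : ℂ) (v : V), circNorm Nr invol d (c • v) = ‖c‖ * circNorm Nr invol d v) ∧
    (∀ u v : V, circNorm Nr invol d (u + v) ≤ circNorm Nr invol d u + circNorm Nr invol d v) := by
  have hd0 : (0:ℝ) < d := lt_of_lt_of_le one_pos hd
  have hdne : d ≠ 0 := ne_of_gt hd0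
  have hπ : (0:ℝ) < 2 * Real.pi := by positivity
  set C := Real.Gamma (d / 2 + 1) ^ 2 / (2 * Real.pi * Real.Gamma (d + 1)) with hCdef
  have hC : 0 < C := by
    apply div_pos (pow_pos (Real.Gamma_pos_of_pos (by linarith)) 2)
    exact mul_pos hπ (Real.Gamma_pos_of_pos (by linarith))
  have hcirc : ∀ v : V, circNorm Nr invol d v
      = (C * ∫ t in (0:ℝ)..(2 * Real.pi), FF Nr invol v t ^ d) ^ (1 / d) := fun v => rfl
  have hF0 := pF0 invol hadd hsmul hinvol Nr hNnonneg
  have hFcont := pFcont invol hadd hsmul hinvol Nr hNnonneg hNhom hNadd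
  have hFdcont : ∀ v : V, Continuous (fun t => FF Nr invol v t ^ d) :=
    fun v => (hFcont v).rpow_const (fun x => Or.inr hd0.le)
  have hInn : ∀ v : V, 0 ≤ ∫ t in (0:ℝ)..(2 * Real.pi), FF Nr invol v t ^ d :=
    fun v => intervalIntegral.integral_nonneg hπ.le
      (fun t _ => Real.rpow_nonneg (hF0 v t) d)
  have hposCI : ∀ v : V,
      0 ≤ C * ∫ t in (0:ℝ)..(2 * Real.pi), FF Nr invol v t ^ d :=
    fun v => mul_nonneg hC.le (hInn v)
  have hnonneg : ∀ v : V, 0 ≤ circNorm Nr invol d v := by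
    intro v; rw [hcirc]; exact Real.rpow_nonneg (hposCI v) _
  have hzero : circNorm Nr invol d (0 : V) = 0 := by
    rw [hcirc]
    have : ∀ t ∈ Set.uIcc (0:ℝ) (2 * Real.pi), FF Nr invol (0:V) t ^ d = (0:ℝ) := by
      intro t _
      rw [pFzero invol hadd hsmul hinvol Nr hNdef t, Real.zero_rpow hdne]
    rw [intervalIntegral.integral_congr this, intervalIntegral.integral_zero, mul_zero,
      Real.zero_rpow (one_div_ne_zero hdne)]
  refine ⟨hnonneg, ?_, ?_, ?_⟩
  · -- zero iff
    intro v
    constructor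
    · intro h
      rw [hcirc] at h
      have h1 : C * ∫ t in (0:ℝ)..(2 * Real.pi), FF Nr invol v t ^ d = 0 :=
        ((Real.rpow_eq_zero_iff_of_nonneg (hposCI v)).mp h).1
      have hI : ∫ t in (0:ℝ)..(2 * Real.pi), FF Nr invol v t ^ d = 0 :=
        (mul_eq_zero.mp h1).resolve_left hC.ne'
      have hIoo := auxZeroOnIoo (hFdcont v) (fun t => Real.rpow_nonneg (hF0 v t) d) hI
      have hval : ∀ t ∈ Set.Ioo (0:ℝ) (2 * Real.pi), FF Nr invol v t = 0 := by
        intro t ht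
        exact ((Real.rpow_eq_zero_iff_of_nonneg (hF0 v t)).mp (hIoo t ht)).1
      have hπmem : Real.pi ∈ Set.Ioo (0:ℝ) (2 * Real.pi) :=
        ⟨Real.pi_pos, by linarith [Real.pi_pos]⟩
      have hπ2mem : Real.pi / 2 ∈ Set.Ioo (0:ℝ) (2 * Real.pi) :=
        ⟨by linarith [Real.pi_pos], by linarith [Real.pi_pos]⟩
      have hA : Nr (v + invol v) = 0 := by
        rw [← pFpi invol hadd hsmul hinvol Nr hNhom v]; exact hval _ hπmem
      have hB : Nr (Complex.I • (v - invol v)) = 0 := by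
        rw [← pFhalf invol hadd hsmul hinvol Nr v]; exact hval _ hπ2mem
      have hA0 : v + invol v = 0 :=
        (hNdef _ (pRA invol hadd hsmul hinvol v)).mp hA
      have hB0 : Complex.I • (v - invol v) = 0 :=
        (hNdef _ (pRB invol hadd hsmul hinvol v)).mp hB
      have hsub : v - invol v = 0 :=
        (smul_eq_zero.mp hB0).resolve_left Complex.I_ne_zero
      have h2 : (2:ℂ) • v = 0 := by
        have e : (2:ℂ) • v = (v + invol v) + (v - invol v) := by
          rw [two_smul]; abel
        rw [e, hA0, hsub, add_zero]
      rcases smul_eq_zero.mp h2 with h | h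
      · norm_num at h
      · exact h
    · intro h; rw [h]; exact hzero
  · -- homogeneity
    intro c v
    by_cases hc : c = 0
    · rw [hc, zero_smul, hzero, norm_zero, zero_mul]
    · rw [hcirc, hcirc]
      have hint : (∫ t in (0:ℝ)..(2 * Real.pi), FF Nr invol (c • v) t ^ d)
          = ‖c‖ ^ d * ∫ t in (0:ℝ)..(2 * Real.pi), FF Nr invol v t ^ d := by
        have hcg : ∀ t ∈ Set.uIcc (0:ℝ) (2 * Real.pi), FF Nr invol (c • v) t ^ d
            = ‖c‖ ^ d * (fun s => FF Nr invol v s ^ d) (t + c.arg) := by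
          intro t _
          rw [pFsmul invol hadd hsmul hinvol Nr hNhom c v t,
            Real.mul_rpow (norm_nonneg c) (hF0 v (t + c.arg))]
        rw [intervalIntegral.integral_congr hcg, intervalIntegral.integral_const_mul]
        congr 1
        have hper : Function.Periodic (fun s => FF Nr invol v s ^ d) (2 * Real.pi) := by
          intro s
          simp only
          rw [pFper invol hadd hsmul hinvol Nr v s]
        calc (∫ t in (0:ℝ)..(2 * Real.pi), (fun s => FF Nr invol v s ^ d) (t + c.arg))
            = ∫ t in (0 + c.arg)..(2 * Real.pi + c.arg), FF Nr invol v t ^ d :=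
              intervalIntegral.integral_comp_add_right (fun s => FF Nr invol v s ^ d) c.arg
          _ = ∫ t in c.arg..(c.arg + 2 * Real.pi), FF Nr invol v t ^ d := by
              rw [zero_add, add_comm]
          _ = ∫ t in (0:ℝ)..(0 + 2 * Real.pi), FF Nr invol v t ^ d :=
              hper.intervalIntegral_add_eq c.arg 0
          _ = ∫ t in (0:ℝ)..(2 * Real.pi), FF Nr invol v t ^ d := by rw [zero_add]
      rw [hint, show C * (‖c‖ ^ d *
          ∫ t in (0:ℝ)..(2 * Real.pi), FF Nr invol v t ^ d)
        = ‖c‖ ^ d *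
          (C * ∫ t in (0:ℝ)..(2 * Real.pi), FF Nr invol v t ^ d) by ring]
      rw [Real.mul_rpow (Real.rpow_nonneg (norm_nonneg c) d) (hposCI v)]
      congr 1
      rw [← Real.rpow_mul (norm_nonneg c), mul_one_div_cancel hdne, Real.rpow_one]
  · -- triangle
    intro u v
    rw [hcirc, hcirc, hcirc]
    have h1 : (∫ t in (0:ℝ)..(2 * Real.pi), FF Nr invol (u + v) t ^ d)
        ≤ ∫ t in (0:ℝ)..(2 * Real.pi), (FF Nr invol u t + FF Nr invol v t) ^ d := by
      apply intervalIntegral.integral_mono_on hπ.le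
        ((hFdcont (u + v)).intervalIntegrable _ _)
        ((((hFcont u).add (hFcont v)).rpow_const
          (fun x => Or.inr hd0.le)).intervalIntegrable _ _)
      intro t _
      exact Real.rpow_le_rpow (hF0 (u + v) t)
        (pFadd invol hadd hsmul hinvol Nr hNadd u v t) hd0.le
    rw [Real.mul_rpow hC.le (hInn (u + v)), Real.mul_rpow hC.le (hInn u),
      Real.mul_rpow hC.le (hInn v), ← mul_add]
    apply mul_le_mul_of_nonneg_left _ (Real.rpow_nonneg hC.le _)
    calc (∫ t in (0:ℝ)..(2 * Real.pi), FF Nr invol (u + v) t ^ d) ^ (1 / d)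
        ≤ (∫ t in (0:ℝ)..(2 * Real.pi), (FF Nr invol u t + FF Nr invol v t) ^ d) ^ (1 / d) :=
          Real.rpow_le_rpow (hInn (u + v)) h1 (by positivity)
      _ ≤ (∫ t in (0:ℝ)..(2 * Real.pi), FF Nr invol u t ^ d) ^ (1 / d)
          + (∫ t in (0:ℝ)..(2 * Real.pi), FF Nr invol v t ^ d) ^ (1 / d) :=
          auxMinkowski hd (hFcont u) (hFcont v) (hF0 u) (hF0 v)
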